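/- Given a modified PCP instance over Σ = {A,B} with pairs (u_i, v_i) padded with • to common length m, there exists an index sequence j₁…j_k ∈ {1,…,n}⁺ with trim(u_{j₁}…u_{j_k}) = trim(v_{j₁}…v_{j_k}) if and only if there exists an index sequence j₁…j_k such that ρ(trim(u_{j₁}…u_{j_k})·Z') + ρ̄(trim(v_{j₁}…v_{j_k})·Z') = 1. -/

import Mathlib

inductive S3 where
  | A : S3
  | B : S3
  | dot : S3
deriving DecidableEq

inductive L3 where
  | A : L3
  | B : L3
  | Z' : L3
deriving DecidableEq

def trim : List S3 → List L3
  | [] => []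
  | S3.A :: w => L3.A :: trim w
  | S3.B :: w => L3.B :: trim w
  | S3.dot :: w => trim w

def theta : L3 → ℚ
  | L3.A => 1
  | L3.B => 0
  | L3.Z' => 1

def thetaBar : L3 → ℚ
  | L3.A => 0
  | L3.B => 1
  | L3.Z' => 1

def rho : List L3 → ℚ
  | [] => 0
  | x :: w => theta x * (1/2) + (1/2) * rho w

def rhoBar : List L3 → ℚ
  | [] => 0
  | x :: w => thetaBar x * (1/2) + (1/2) * rhoBar w

lemma sum_eq_one : ∀ w : List L3, L3.Z' ∉ w →
    rho (w ++ [L3.Z']) + rhoBar (w ++ [L3.Z']) = 1 := by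
  intro w
  induction w with
  | nil => intro _; norm_num [rho, rhoBar, theta, thetaBar]
  | cons x w ih =>
    intro hw
    have hx : x ≠ L3.Z' := fun h => hw (h ▸ List.mem_cons_self)
    have h := ih (fun h => hw (List.mem_cons_of_mem _ h))
    simp only [List.cons_append, List.append_eq, rho, rhoBar]
    cases x with
    | A => simp only [theta, thetaBar]; linarith
    | B => simp only [theta, thetaBar]; linarith
    | Z' => exact absurd rfl hx

lemma trim_no_Z' : ∀ w : List S3, L3.Z' ∉ trim w
  | [] => by simp [trim]
  | S3.A :: w => by simp [trim]; exact fun h => absurd h (trim_no_Z' w)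
  | S3.B :: w => by simp [trim]; exact fun h => absurd h (trim_no_Z' w)
  | S3.dot :: w => by simp [trim]; exact trim_no_Z' w

lemma rho_z_pos : ∀ u : List L3, 0 < rho (u ++ [L3.Z'])
  | [] => by norm_num [rho, theta]
  | x :: u => by
    have h := rho_z_pos u
    have ht : (0:ℚ) ≤ theta x := by cases x <;> norm_num [theta]
    simp only [List.cons_append, List.append_eq, rho]
    nlinarith

lemma rho_z_lt_one : ∀ u : List L3, rho (u ++ [L3.Z']) < 1
  | [] => by norm_num [rho, theta]
  | x :: u => by
    have h := rho_z_lt_one u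
    have ht : theta x ≤ 1 := by cases x <;> norm_num [theta]
    simp only [List.cons_append, List.append_eq, rho]
    nlinarith

lemma rhoBar_z_pos : ∀ u : List L3, 0 < rhoBar (u ++ [L3.Z'])
  | [] => by norm_num [rhoBar, thetaBar]
  | x :: u => by
    have h := rhoBar_z_pos u
    have ht : (0:ℚ) ≤ thetaBar x := by cases x <;> norm_num [thetaBar]
    simp only [List.cons_append, List.append_eq, rhoBar]
    nlinarith

lemma rhoBar_z_lt_one : ∀ u : List L3, rhoBar (u ++ [L3.Z']) < 1
  | [] => by norm_num [rhoBar, thetaBar]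
  | x :: u => by
    have h := rhoBar_z_lt_one u
    have ht : thetaBar x ≤ 1 := by cases x <;> norm_num [thetaBar]
    simp only [List.cons_append, List.append_eq, rhoBar]
    nlinarith

lemma key : ∀ u v : List L3, L3.Z' ∉ u → L3.Z' ∉ v →
    (rho (u ++ [L3.Z']) + rhoBar (v ++ [L3.Z']) = 1 ↔ u = v) := by
  intro u
  induction u with
  | nil =>
    intro v _ hv
    cases v with
    | nil => norm_num [rho, rhoBar, theta, thetaBar]
    | cons y v =>
      have hy : y ≠ L3.Z' := fun h => hv (h ▸ List.mem_cons_self)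
      constructor
      · intro h
        exfalso
        have h1 := rhoBar_z_pos v
        have h2 := rhoBar_z_lt_one v
        simp only [List.cons_append, List.append_eq, rho, rhoBar, theta] at h
        cases y with
        | A => simp only [List.append_eq, List.nil_append, thetaBar, rho, theta] at h; linarith
        | B => simp only [List.append_eq, List.nil_append, thetaBar, rho, theta] at h; linarith
        | Z' => exact hy rfl
      · intro h; exact absurd h (by simp)
  | cons x u ih =>
    intro v hu hv
    have hx : x ≠ L3.Z' := fun h => hu (h ▸ List.mem_cons_self)
    have hu' : L3.Z' ∉ u := fun h => hu (List.mem_cons_of_mem _ h)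
    cases v with
    | nil =>
      constructor
      · intro h
        exfalso
        have h1 := rho_z_pos u
        have h2 := rho_z_lt_one u
        simp only [List.cons_append, List.append_eq, rho, rhoBar, thetaBar] at h
        cases x with
        | A => simp [theta, rhoBar, thetaBar] at h; linarith
        | B => simp [theta, rhoBar, thetaBar] at h; linarith
        | Z' => exact hx rfl
      · intro h; exact absurd h (by simp)
    | cons y v =>
      have hy : y ≠ L3.Z' := fun h => hv (h ▸ List.mem_cons_self)
      have hv' : L3.Z' ∉ v := fun h => hv (List.mem_cons_of_mem _ h)
      have IH := ih v hu' hv'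
      have h1 := rho_z_pos u
      have h2 := rho_z_lt_one u
      have h3 := rhoBar_z_pos v
      have h4 := rhoBar_z_lt_one v
      constructor
      · intro h
        simp only [List.cons_append, List.append_eq, rho, rhoBar] at h
        cases x with
        | Z' => exact absurd rfl hx
        | A =>
          cases y with
          | Z' => exact absurd rfl hy
          | A =>
            simp only [theta, thetaBar] at h
            have : rho (u ++ [L3.Z']) + rhoBar (v ++ [L3.Z']) = 1 := by linarith
            rw [IH.mp this]
          | B => exfalso; simp only [List.append_eq, theta, thetaBar] at h; linarith
        | B =>
          cases y with
          | Z' => exact absurd rfl hy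
          | B =>
            simp only [theta, thetaBar] at h
            have : rho (u ++ [L3.Z']) + rhoBar (v ++ [L3.Z']) = 1 := by linarith
            rw [IH.mp this]
          | A => exfalso; simp only [List.append_eq, theta, thetaBar] at h; linarith
      · intro h
        obtain ⟨rfl, rfl⟩ : x = y ∧ u = v := by
          injection h with h1 h2; exact ⟨h1, h2⟩
        exact sum_eq_one _ hu

/-- Given a modified PCP instance with pairs (u_i, v_i) ∈ Σ^m × Σ^m, there is a nonempty
index sequence with trim(u_{j₁}…u_{j_k}) = trim(v_{j₁}…v_{j_k}) iff there is a nonempty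
index sequence with ρ(trim(u_{j₁}…u_{j_k})·Z') + ρ̄(trim(v_{j₁}…v_{j_k})·Z') = 1. -/
theorem modifiedPCP_iff (m : ℕ) (pairs : List (List S3 × List S3))
    (hlen : ∀ p ∈ pairs, p.1.length = m ∧ p.2.length = m) :
    (∃ js : List (Fin pairs.length), js ≠ [] ∧
        trim ((js.map (fun j => (pairs.get j).1)).flatten)
          = trim ((js.map (fun j => (pairs.get j).2)).flatten))
    ↔ (∃ js : List (Fin pairs.length), js ≠ [] ∧
        rho (trim ((js.map (fun j => (pairs.get j).1)).flatten) ++ [L3.Z'])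
          + rhoBar (trim ((js.map (fun j => (pairs.get j).2)).flatten) ++ [L3.Z']) = 1) := by
  constructor
  · rintro ⟨js, hne, heq⟩
    exact ⟨js, hne, (key _ _ (trim_no_Z' _) (trim_no_Z' _)).mpr heq⟩
  · rintro ⟨js, hne, heq⟩
    exact ⟨js, hne, (key _ _ (trim_no_Z' _) (trim_no_Z' _)).mp heq⟩
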